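/- arXiv:2403.10957 — 7 statements merged into one kernel-verified Lean document; each statement's English description precedes it below -/
import Mathlib

section
/- Let r ≥ 2 be an integer, let G be a finite simple graph in which every vertex has degree at least r, and let H be a connected finite simple graph. Then for any fixed vertex h of H, the G-layer G^h = {(g,h) : g ∈ V(G)} is an r-percolating set of the direct product G×H; consequently m(G×H, r) ≤ |V(G)|. -/
open SimpleGraph

/-- The direct (tensor/categorical) product of two simple graphs. -/
def directProd {V W : Type*} (G : SimpleGraph V) (H : SimpleGraph W) :
    SimpleGraph (V × W) where
  Adj p q := G.Adj p.1 q.1 ∧ H.Adj p.2 q.2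
  symm := ⟨fun _ _ h => ⟨h.1.symm, h.2.symm⟩⟩
  loopless := ⟨fun p h => G.loopless.irrefl p.1 h.1⟩

/-- One step of the `r`-neighbor bootstrap percolation process: a vertex becomes
infected once it has at least `r` infected neighbors. -/
def percStep {V : Type*} (G : SimpleGraph V) (r : ℕ) (A : Set V) : Set V :=
  A ∪ {v | r ≤ {u | G.Adj v u ∧ u ∈ A}.ncard}

/-- `A` is an `r`-percolating set: iterating the update rule eventually infects
every vertex of the graph. -/
def Percolates {V : Type*} (G : SimpleGraph V) (r : ℕ) (A : Set V) : Prop :=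
  ∃ t : ℕ, (percStep G r)^[t] A = Set.univ

/-- `percNum G r` is `m(G,r)`, the minimum cardinality of an `r`-percolating set. -/
noncomputable def percNum {V : Type*} (G : SimpleGraph V) (r : ℕ) : ℕ :=
  sInf {n | ∃ A : Set V, Percolates G r A ∧ A.ncard = n}

theorem stmt_1 {V W : Type*} [Fintype V] [Fintype W]
    (G : SimpleGraph V) (H : SimpleGraph W) [DecidableRel G.Adj]
    (r : ℕ) (hr : 2 ≤ r) (hdeg : ∀ v : V, r ≤ G.degree v) (hH : H.Connected)
    (h : W) :
    Percolates (directProd G H) r {p : V × W | p.2 = h} ∧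
      percNum (directProd G H) r ≤ Fintype.card V := by
  classical
  set A : Set (V × W) := {p : V × W | p.2 = h} with hA
  have key : ∀ t : ℕ, {p : V × W | H.dist p.2 h ≤ t} ⊆ (percStep (directProd G H) r)^[t] A := by
    intro t
    induction t with
    | zero =>
      intro p hp
      simp only [Set.mem_setOf_eq, Nat.le_zero] at hp
      have : p.2 = h := by
        rcases (SimpleGraph.dist_eq_zero_iff_eq_or_not_reachable.mp hp) with h1 | h2
        · exact h1
        · exact absurd (hH p.2 h) h2
      exact this
    | succ t ih =>
      intro p hp
      simp only [Set.mem_setOf_eq] at hp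
      rw [Function.iterate_succ_apply']
      by_cases hle : H.dist p.2 h ≤ t
      · exact Set.subset_union_left (ih hle)
      · -- dist = t+1
        have hd : H.dist p.2 h = t + 1 := le_antisymm hp (Nat.lt_of_not_le hle)
        obtain ⟨w, hw⟩ := (hH p.2 h).exists_walk_length_eq_dist
        rw [hd] at hw
        cases w with
        | nil => simp at hw
        | cons hadj w' =>
          rename_i b
          have hwlen : w'.length = t := by simpa using hw
          have hbd : H.dist b h ≤ t := hwlen ▸ SimpleGraph.dist_le w'
          -- all (u, b) with G.Adj p.1 u are infected neighbors of p
          right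
          have hsub : (fun u => (u, b)) '' (G.neighborSet p.1) ⊆
              {q | (directProd G H).Adj p q ∧ q ∈ (percStep (directProd G H) r)^[t] A} := by
            rintro q ⟨u, hu, rfl⟩
            refine ⟨⟨hu, hadj⟩, ih ?_⟩
            exact hbd
          have hcard : ((fun u => (u, b)) '' (G.neighborSet p.1)).ncard =
              G.degree p.1 := by
            rw [Set.ncard_image_of_injective _ (fun a a' haa => by simpa using haa)]
            rw [Set.ncard_eq_toFinset_card', ← SimpleGraph.card_neighborFinset_eq_degree]
            congr 1
          have := Set.ncard_le_ncard hsub (Set.toFinite _)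
          simp only [Set.mem_setOf_eq]
          calc r ≤ G.degree p.1 := hdeg p.1
            _ = _ := hcard.symm
            _ ≤ _ := this
  have hperc : Percolates (directProd G H) r A := by
    refine ⟨Fintype.card W, ?_⟩
    apply Set.eq_univ_of_univ_subset
    intro p _
    apply key
    simp only [Set.mem_setOf_eq]
    obtain ⟨w, hw⟩ := (hH p.2 h).exists_walk_length_eq_dist
    have hpath := w.toPath
    calc H.dist p.2 h ≤ (w.toPath : H.Walk p.2 h).length := SimpleGraph.dist_le _
      _ ≤ Fintype.card W := le_of_lt (w.toPath.2).length_lt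
  refine ⟨hperc, ?_⟩
  have hcardA : A.ncard = Fintype.card V := by
    have : A = (fun v => (v, h)) '' Set.univ := by
      ext p
      simp only [hA, Set.mem_setOf_eq, Set.image_univ, Set.mem_range]
      constructor
      · intro hp; exact ⟨p.1, Prod.ext rfl hp.symm⟩
      · rintro ⟨v, rfl⟩; rfl
    rw [this, Set.ncard_image_of_injective _ (fun a a' haa => by simpa using haa),
      Set.ncard_univ, Nat.card_eq_fintype_card]
  exact Nat.sInf_le ⟨A, hperc, hcardA⟩
end

section
/- If G and H are finite simple graphs each having minimum degree at least 2 (every vertex of G has degree at least 2 in G and every vertex of H has degree at least 2 in H), then m(G×H, 2) ≤ |V(G×H)|/2, i.e., the direct product G×H has a 2-percolating set of size at most half its order. -/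
open SimpleGraph

theorem stmt_2 {V W : Type*} [Fintype V] [Fintype W]
    (G : SimpleGraph V) (H : SimpleGraph W)
    [DecidableRel G.Adj] [DecidableRel H.Adj]
    (hG : ∀ v : V, 2 ≤ G.degree v) (hH : ∀ w : W, 2 ≤ H.degree w) :
    2 * percNum (directProd G H) 2 ≤ Fintype.card (V × W) := by
  classical
  set f := percStep (directProd G H) 2 with hfdef
  haveI : Finite H.ConnectedComponent := Quot.finite _
  haveI : Fintype H.ConnectedComponent := Fintype.ofFinite _
  -- representative of each component
  set rep : H.ConnectedComponent → W := fun c => c.out with hrep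
  have rep_mk : ∀ c : H.ConnectedComponent, H.connectedComponentMk (rep c) = c :=
    fun c => Quot.out_eq c
  have rep_inj : Function.Injective rep := by
    intro c c' h
    rw [← rep_mk c, ← rep_mk c', h]
  -- the initial set
  set A : Set (V × W) := {p | ∃ c : H.ConnectedComponent, p.2 = rep c} with hA
  -- basic iterate facts
  have hsub : ∀ (n : ℕ) (s : Set (V × W)), s ⊆ f^[n] s := by
    intro n
    induction n with
    | zero => intro s; simp
    | succ n ih =>
      intro s
      rw [Function.iterate_succ_apply]
      exact (Set.subset_union_left).trans (ih (f s))
  -- spreading step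
  have step : ∀ (t : ℕ) (w w' : W), H.Adj w w' → (∀ v, (v, w') ∈ f^[t] A) →
      ∀ v, (v, w) ∈ f^[t + 1] A := by
    intro t w w' hww' hrow v
    rw [Function.iterate_succ_apply']
    refine Or.inr ?_
    show 2 ≤ {u | (directProd G H).Adj (v, w) u ∧ u ∈ f^[t] A}.ncard
    have hdeg : 1 < (G.neighborFinset v).card := by
      have := hG v
      rw [SimpleGraph.degree] at this
      omega
    obtain ⟨v₁, hv₁, v₂, hv₂, hne⟩ := Finset.one_lt_card.mp hdeg
    rw [SimpleGraph.mem_neighborFinset] at hv₁ hv₂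
    have hsubset : ({(v₁, w'), (v₂, w')} : Set (V × W)) ⊆
        {u | (directProd G H).Adj (v, w) u ∧ u ∈ f^[t] A} := by
      rintro p (rfl | rfl)
      · exact ⟨⟨hv₁, hww'⟩, hrow v₁⟩
      · exact ⟨⟨hv₂, hww'⟩, hrow v₂⟩
    have hpair : ({(v₁, w'), (v₂, w')} : Set (V × W)).ncard = 2 :=
      Set.ncard_pair (by simp [hne])
    calc 2 = ({(v₁, w'), (v₂, w')} : Set (V × W)).ncard := hpair.symm
      _ ≤ _ := Set.ncard_le_ncard hsubset (Set.toFinite _)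
  -- every row eventually infected
  have rowAll : ∀ w : W, ∃ t, ∀ v, (v, w) ∈ f^[t] A := by
    have key : ∀ (a b : W) (p : H.Walk a b), (∃ t, ∀ v, (v, a) ∈ f^[t] A) →
        ∃ t, ∀ v, (v, b) ∈ f^[t] A := by
      intro a b p
      induction p with
      | nil => exact id
      | cons h q ih =>
        rintro ⟨t, ht⟩
        exact ih ⟨t + 1, step t _ _ h.symm ht⟩
    intro w
    have hreach : H.Reachable (rep (H.connectedComponentMk w)) w :=
      SimpleGraph.ConnectedComponent.exact (by rw [rep_mk])
    obtain ⟨p⟩ := hreach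
    exact key _ _ p ⟨0, fun v => ⟨H.connectedComponentMk w, rfl⟩⟩
  -- A percolates
  have perc : Percolates (directProd G H) 2 A := by
    choose tfun hfun using rowAll
    refine ⟨Finset.univ.sup (fun w => tfun w), ?_⟩
    ext p
    simp only [Set.mem_univ, iff_true]
    have hle : tfun p.2 ≤ Finset.univ.sup (fun w => tfun w) :=
      Finset.le_sup (Finset.mem_univ _)
    obtain ⟨n, hn⟩ := Nat.exists_eq_add_of_le hle
    rw [hn, add_comm, Function.iterate_add_apply]
    exact hsub n _ (hfun p.2 p.1)
  -- cardinality of A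
  have hAcard : A.ncard = Fintype.card V * Fintype.card H.ConnectedComponent := by
    have : A = ↑((Finset.univ : Finset V) ×ˢ (Finset.univ.image rep)) := by
      ext p
      simp [hA, eq_comm]
    rw [this, Set.ncard_coe_finset, Finset.card_product,
      Finset.card_image_of_injective _ rep_inj]
    simp
  -- two vertices per component
  have hcc : 2 * Fintype.card H.ConnectedComponent ≤ Fintype.card W := by
    have nbex : ∀ c : H.ConnectedComponent, ∃ w, H.Adj (rep c) w := by
      intro c
      have : 0 < (H.neighborFinset (rep c)).card := by
        have := hH (rep c); rw [SimpleGraph.degree] at this; omega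
      obtain ⟨w, hw⟩ := Finset.card_pos.mp this
      exact ⟨w, (SimpleGraph.mem_neighborFinset _ _ _).mp hw⟩
    choose nb hnb using nbex
    have comp_rep : ∀ c, H.connectedComponentMk (rep c) = c := rep_mk
    have comp_nb : ∀ c, H.connectedComponentMk (nb c) = c := by
      intro c
      calc H.connectedComponentMk (nb c)
          = H.connectedComponentMk (rep c) :=
            SimpleGraph.ConnectedComponent.sound (hnb c).symm.reachable
        _ = c := comp_rep c
    set g : H.ConnectedComponent × Bool → W :=
      fun x => if x.2 then nb x.1 else rep x.1 with hg
    have hginj : Function.Injective g := by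
      rintro ⟨c, b⟩ ⟨c', b'⟩ h
      simp only [hg] at h
      have hcomp : c = c' := by
        have h1 : H.connectedComponentMk (if b then nb c else rep c) = c := by
          cases b <;> simp [comp_rep, comp_nb]
        have h2 : H.connectedComponentMk (if b' then nb c' else rep c') = c' := by
          cases b' <;> simp [comp_rep, comp_nb]
        rw [← h1, ← h2, h]
      subst hcomp
      have hne : rep c ≠ nb c := by
        intro he
        exact H.loopless.irrefl _ (he ▸ hnb c)
      cases b <;> cases b' <;> simp_all
    have := Fintype.card_le_of_injective g hginj
    simpa [Fintype.card_prod, mul_comm] using this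
  have hperc : percNum (directProd G H) 2 ≤ A.ncard :=
    Nat.sInf_le ⟨A, perc, rfl⟩
  calc 2 * percNum (directProd G H) 2 ≤ 2 * A.ncard := by omega
    _ = Fintype.card V * (2 * Fintype.card H.ConnectedComponent) := by
        rw [hAcard]; ring
    _ ≤ Fintype.card V * Fintype.card W :=
        Nat.mul_le_mul_left _ hcc
    _ = Fintype.card (V × W) := (Fintype.card_prod V W).symm
end

section
/- The direct product P₃×P₃ of two paths on 3 vertices satisfies m(P₃×P₃, 2) = 6. -/
open SimpleGraph

namespace Stmt13Aux

instance : DecidableRel (pathGraph 3).Adj := fun _ _ => decidable_of_iff _ pathGraph_adj.symm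
instance : DecidableRel (directProd (pathGraph 3) (pathGraph 3)).Adj := fun p q =>
  inferInstanceAs (Decidable ((pathGraph 3).Adj p.1 q.1 ∧ (pathGraph 3).Adj p.2 q.2))

abbrev VV := Fin 3 × Fin 3
abbrev GG := directProd (pathGraph 3) (pathGraph 3)

/-- the four corners -/
def Corners : Set VV := {(0,0), (0,2), (2,0), (2,2)}

/-- the 4-cycle component -/
def C4 : Set VV := {(0,1), (1,0), (1,2), (2,1)}

lemma corner_nbr : ∀ v ∈ Corners, ∀ u : VV, GG.Adj v u → u = (1,1) := by
  intro v hv u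
  simp only [Corners, Set.mem_insert_iff, Set.mem_singleton_iff] at hv
  rcases hv with h | h | h | h <;> subst h <;> revert u <;> decide

lemma c4_nbr : ∀ v ∈ C4, ∀ u : VV, GG.Adj v u → u ∈ C4 := by
  intro v hv u
  simp only [C4, Set.mem_insert_iff, Set.mem_singleton_iff] at hv ⊢
  rcases hv with h | h | h | h <;> subst h <;> revert u <;> decide

lemma subset_percStep {V : Type*} (G : SimpleGraph V) (r : ℕ) (A : Set V) :
    A ⊆ percStep G r A := Set.subset_union_left

/-- A corner never becomes infected if it is not initially infected. -/
lemma corner_stays (c : VV) (hc : c ∈ Corners) (A : Set VV) (hA : c ∉ A) :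
    ∀ t, c ∉ (percStep GG 2)^[t] A := by
  intro t
  induction t generalizing A with
  | zero => simpa
  | succ n ih =>
    rw [Function.iterate_succ_apply]
    apply ih
    intro hmem
    rcases hmem with h | h
    · exact hA h
    · simp only [Set.mem_setOf_eq] at h
      have hsub : {u : VV | GG.Adj c u ∧ u ∈ A} ⊆ {((1:Fin 3),(1:Fin 3))} := by
        intro u hu
        exact corner_nbr c hc u hu.1
      have h2 : (2:ℕ) ≤ ({((1:Fin 3),(1:Fin 3))} : Set VV).ncard :=
        le_trans h (Set.ncard_le_ncard hsub (Set.finite_singleton _))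
      rw [Set.ncard_singleton] at h2
      omega

/-- If at most one vertex of the 4-cycle is infected, none of the rest ever gets infected. -/
lemma c4_stays (A : Set VV) (hA : (A ∩ C4).ncard ≤ 1) :
    ∀ t, ((percStep GG 2)^[t] A) ∩ C4 = A ∩ C4 := by
  intro t
  induction t with
  | zero => simp
  | succ n ih =>
    rw [Function.iterate_succ_apply']
    apply Set.Subset.antisymm
    · rintro v ⟨hv, hvC⟩
      rcases hv with h | h
      · rw [← ih]; exact ⟨h, hvC⟩
      · simp only [Set.mem_setOf_eq] at h
        exfalso
        have hsub : {u : VV | GG.Adj v u ∧ u ∈ (percStep GG 2)^[n] A} ⊆ A ∩ C4 := by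
          intro u hu
          have huC : u ∈ C4 := c4_nbr v hvC u hu.1
          have : u ∈ ((percStep GG 2)^[n] A) ∩ C4 := ⟨hu.2, huC⟩
          rw [ih] at this
          exact this
        have h2 : (2:ℕ) ≤ (A ∩ C4).ncard :=
          le_trans h (Set.ncard_le_ncard hsub (Set.toFinite _))
        omega
    · rw [← ih]
      exact Set.inter_subset_inter_left _ (subset_percStep _ _ _)

lemma ncard_C4 : C4.ncard = 4 := by
  have : C4 = (↑({(0,1), (1,0), (1,2), (2,1)} : Finset VV) : Set VV) := by
    simp [C4]
  rw [this, Set.ncard_coe_finset]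
  decide

lemma ncard_Corners : Corners.ncard = 4 := by
  have : Corners = (↑({(0,0), (0,2), (2,0), (2,2)} : Finset VV) : Set VV) := by
    simp [Corners]
  rw [this, Set.ncard_coe_finset]
  decide

/-- The explicit percolating set. -/
def A0 : Set VV := {(0,0), (0,2), (2,0), (2,2), (0,1), (2,1)}

lemma A0_ncard : A0.ncard = 6 := by
  have : A0 = (↑({(0,0), (0,2), (2,0), (2,2), (0,1), (2,1)} : Finset VV) : Set VV) := by
    simp [A0]
  rw [this, Set.ncard_coe_finset]
  decide

lemma two_le_ncard_of_pair {a b : VV} {S : Set VV} (hne : a ≠ b) (ha : a ∈ S) (hb : b ∈ S) :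
    2 ≤ S.ncard := by
  have hsub : ({a, b} : Set VV) ⊆ S := by
    intro u hu
    rcases hu with h | h
    · subst h; exact ha
    · rw [Set.mem_singleton_iff] at h; subst h; exact hb
  calc 2 = ({a, b} : Set VV).ncard := (Set.ncard_pair hne).symm
    _ ≤ S.ncard := Set.ncard_le_ncard hsub (Set.toFinite _)

lemma A0_percolates : Percolates GG 2 A0 := by
  refine ⟨1, ?_⟩
  rw [Function.iterate_one, Set.eq_univ_iff_forall]
  rintro ⟨i, j⟩
  have memA0 : ∀ v : VV, (v = (0,0) ∨ v = (0,2) ∨ v = (2,0) ∨ v = (2,2) ∨ v = (0,1) ∨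
      v = (2,1)) → v ∈ A0 := by
    intro v hv
    simpa [A0, Set.mem_insert_iff, Set.mem_singleton_iff] using hv
  fin_cases i <;> fin_cases j
  · exact Or.inl (memA0 _ (by decide))
  · exact Or.inl (memA0 _ (by tauto))
  · exact Or.inl (memA0 _ (by tauto))
  · -- (1,0)
    refine Or.inr ?_
    simp only [Set.mem_setOf_eq]
    exact two_le_ncard_of_pair (a := (0,1)) (b := (2,1)) (by decide)
      ⟨by decide, memA0 _ (by tauto)⟩ ⟨by decide, memA0 _ (by tauto)⟩
  · -- (1,1)
    refine Or.inr ?_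
    simp only [Set.mem_setOf_eq]
    exact two_le_ncard_of_pair (a := (0,0)) (b := (0,2)) (by decide)
      ⟨by decide, memA0 _ (by tauto)⟩ ⟨by decide, memA0 _ (by tauto)⟩
  · -- (1,2)
    refine Or.inr ?_
    simp only [Set.mem_setOf_eq]
    exact two_le_ncard_of_pair (a := (0,1)) (b := (2,1)) (by decide)
      ⟨by decide, memA0 _ (by tauto)⟩ ⟨by decide, memA0 _ (by tauto)⟩
  · exact Or.inl (memA0 _ (by tauto))
  · exact Or.inl (memA0 _ (by tauto))
  · exact Or.inl (memA0 _ (by tauto))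

lemma lower_bound (A : Set VV) (hA : Percolates GG 2 A) : 6 ≤ A.ncard := by
  obtain ⟨t, ht⟩ := hA
  -- corners are contained in A
  have hcor : Corners ⊆ A := by
    intro c hc
    by_contra hcA
    have := corner_stays c hc A hcA t
    rw [ht] at this
    exact this (Set.mem_univ c)
  -- at least two vertices of the 4-cycle are in A
  have hC4 : 2 ≤ (A ∩ C4).ncard := by
    by_contra h
    push_neg at h
    have h1 : (A ∩ C4).ncard ≤ 1 := by omega
    have := c4_stays A h1 t
    rw [ht, Set.univ_inter] at this
    rw [← this, ncard_C4] at h1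
    omega
  have hdisj : Disjoint Corners (A ∩ C4) := by
    have : Disjoint Corners C4 := by
      rw [Set.disjoint_iff_inter_eq_empty]
      ext v
      simp only [Corners, C4, Set.mem_inter_iff, Set.mem_insert_iff, Set.mem_singleton_iff,
        Set.mem_empty_iff_false, iff_false, not_and]
      rintro (h | h | h | h) <;> subst h <;> decide
    exact this.mono_right Set.inter_subset_right
  have hsub : Corners ∪ (A ∩ C4) ⊆ A := by
    intro v hv
    rcases hv with h | h
    · exact hcor h
    · exact h.1
  calc 6 = 4 + 2 := rfl
    _ ≤ Corners.ncard + (A ∩ C4).ncard := by rw [ncard_Corners]; omega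
    _ = (Corners ∪ (A ∩ C4)).ncard :=
        (Set.ncard_union_eq hdisj (Set.toFinite _) (Set.toFinite _)).symm
    _ ≤ A.ncard := Set.ncard_le_ncard hsub (Set.toFinite _)

end Stmt13Aux

theorem stmt_13 : percNum (directProd (pathGraph 3) (pathGraph 3)) 2 = 6 := by
  unfold percNum
  apply le_antisymm
  · exact Nat.sInf_le ⟨Stmt13Aux.A0, Stmt13Aux.A0_percolates, Stmt13Aux.A0_ncard⟩
  · refine le_csInf ⟨6, Stmt13Aux.A0, Stmt13Aux.A0_percolates, Stmt13Aux.A0_ncard⟩ ?_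
    rintro n ⟨A, hA, rfl⟩
    exact Stmt13Aux.lower_bound A hA
end

section
/- If G is a bipartite finite simple graph in which every vertex has degree at least 2, then m(G, 2) ≤ |V(G)|/2, i.e., G has a 2-percolating set of size at most half its order. -/
open SimpleGraph

theorem stmt_15 {V : Type*} [Fintype V] (G : SimpleGraph V) [DecidableRel G.Adj]
    (hbip : G.Colorable 2) (hδ : ∀ v : V, 2 ≤ G.degree v) :
    2 * percNum G 2 ≤ Fintype.card V := by
  classical
  obtain ⟨C⟩ := hbip
  have hperc : ∀ i : Fin 2, Percolates G 2 (C ⁻¹' {i}) := by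
    intro i
    refine ⟨1, ?_⟩
    rw [Function.iterate_one]
    ext v
    simp only [Set.mem_univ, iff_true, percStep, Set.mem_union]
    by_cases h : C v = i
    · exact Or.inl h
    · right
      have hset : {u | G.Adj v u ∧ u ∈ C ⁻¹' {i}} = G.neighborSet v := by
        ext u
        simp only [Set.mem_setOf_eq, Set.mem_preimage, Set.mem_singleton_iff,
          SimpleGraph.mem_neighborSet, and_iff_left_iff_imp]
        intro hadj
        have hne : C v ≠ C u := C.valid hadj
        have h1 : (C v).val < 2 := (C v).isLt
        have h2 : (C u).val < 2 := (C u).isLt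
        have h3 : (i : Fin 2).val < 2 := i.isLt
        have h4 : (C v).val ≠ (C u).val := fun hh => hne (Fin.ext hh)
        have h5 : (C v).val ≠ i.val := fun hh => h (Fin.ext hh)
        exact Fin.ext (by omega)
      have : {u | G.Adj v u ∧ u ∈ C ⁻¹' {i}}.ncard = G.degree v := by
        rw [hset, Set.ncard_eq_toFinset_card', SimpleGraph.degree,
          SimpleGraph.neighborFinset_def]
      rw [Set.mem_setOf_eq, this]
      exact hδ v
  have hle : ∀ i : Fin 2, percNum G 2 ≤ (C ⁻¹' {i}).ncard := fun i =>
    Nat.sInf_le ⟨C ⁻¹' {i}, hperc i, rfl⟩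
  have hcompl : (C ⁻¹' {(1 : Fin 2)}) = (C ⁻¹' {(0 : Fin 2)})ᶜ := by
    ext v
    simp only [Set.mem_preimage, Set.mem_singleton_iff, Set.mem_compl_iff]
    constructor
    · intro h h0; rw [h0] at h; exact absurd h (by decide)
    · intro h; omega
  have hsum : (C ⁻¹' {(0 : Fin 2)}).ncard + (C ⁻¹' {(1 : Fin 2)}).ncard
      = Fintype.card V := by
    rw [hcompl, Set.ncard_add_ncard_compl, Nat.card_eq_fintype_card]
  rcases le_total ((C ⁻¹' {(0 : Fin 2)}).ncard) ((C ⁻¹' {(1 : Fin 2)}).ncard) with h | h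
  · have := hle 0; omega
  · have := hle 1; omega
end

section
/- For every integer r ≥ 2, the direct product K_{r,r}×K₂ of the complete bipartite graph K_{r,r} with the complete graph on two vertices satisfies m(K_{r,r}×K₂, r) = 2r, i.e., its r-bootstrap percolation number equals the order of K_{r,r}. -/
open SimpleGraph

namespace Perc16

abbrev Vtx (r : ℕ) := (Fin r ⊕ Fin r) × Fin 2

abbrev Gg (r : ℕ) : SimpleGraph (Vtx r) :=
  directProd (completeBipartiteGraph (Fin r) (Fin r)) (⊤ : SimpleGraph (Fin 2))

/-- the other element of `Fin 2` -/
def otr (i : Fin 2) : Fin 2 := ⟨1 - i.val, by omega⟩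

lemma fin2_ne_iff : ∀ i j : Fin 2, i ≠ j ↔ j = otr i := by decide

lemma otr_otr : ∀ i : Fin 2, otr (otr i) = i := by decide

def Lside (r : ℕ) (i : Fin 2) : Set (Vtx r) :=
  (fun a => ((Sum.inl a : Fin r ⊕ Fin r), i)) '' Set.univ

def Rside (r : ℕ) (i : Fin 2) : Set (Vtx r) :=
  (fun a => ((Sum.inr a : Fin r ⊕ Fin r), i)) '' Set.univ

lemma ncard_Lside (r : ℕ) (i : Fin 2) : (Lside r i).ncard = r := by
  rw [Lside, Set.ncard_image_of_injective _ (fun a b h => by simpa using h),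
    Set.ncard_univ, Nat.card_eq_fintype_card, Fintype.card_fin]

lemma ncard_Rside (r : ℕ) (i : Fin 2) : (Rside r i).ncard = r := by
  rw [Rside, Set.ncard_image_of_injective _ (fun a b h => by simpa using h),
    Set.ncard_univ, Nat.card_eq_fintype_card, Fintype.card_fin]

lemma adj_iff (r : ℕ) (p q : Vtx r) :
    (Gg r).Adj p q ↔ (completeBipartiteGraph (Fin r) (Fin r)).Adj p.1 q.1 ∧ p.2 ≠ q.2 := by
  constructor
  · exact fun h => ⟨h.1, h.2.ne⟩
  · exact fun h => ⟨h.1, h.2⟩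

lemma nbhd_inl (r : ℕ) (a : Fin r) (i : Fin 2) :
    {u | (Gg r).Adj (Sum.inl a, i) u} = Rside r (otr i) := by
  ext ⟨x, j⟩
  simp only [Set.mem_setOf_eq, adj_iff, Rside, Set.image_univ, Set.mem_range]
  cases x with
  | inl b => simp
  | inr b =>
    simp only [completeBipartiteGraph_adj, Sum.isLeft_inl, Sum.isRight_inr, and_self,
      Sum.isRight_inl, Sum.isLeft_inr, and_false, or_false, false_and, true_and]
    constructor
    · rintro ⟨-, h⟩
      exact ⟨b, by rw [(fin2_ne_iff i j).mp h]⟩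
    · rintro ⟨c, hc⟩
      obtain ⟨h1, h2⟩ := Prod.mk.injEq .. ▸ hc
      exact ⟨by simp, (fin2_ne_iff i j).mpr (by simp_all)⟩

lemma nbhd_inr (r : ℕ) (a : Fin r) (i : Fin 2) :
    {u | (Gg r).Adj (Sum.inr a, i) u} = Lside r (otr i) := by
  ext ⟨x, j⟩
  simp only [Set.mem_setOf_eq, adj_iff, Lside, Set.image_univ, Set.mem_range]
  cases x with
  | inr b => simp
  | inl b =>
    simp only [completeBipartiteGraph_adj, Sum.isLeft_inl, Sum.isRight_inr,
      Sum.isRight_inl, Sum.isLeft_inr, and_false, false_and, or_false, false_or, true_and,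
      and_true, and_self]
    constructor
    · rintro ⟨-, h⟩
      exact ⟨b, by rw [(fin2_ne_iff i j).mp h]⟩
    · rintro ⟨c, hc⟩
      obtain ⟨h1, h2⟩ := Prod.mk.injEq .. ▸ hc
      exact ⟨by simp, (fin2_ne_iff i j).mpr (by simp_all)⟩

lemma ncard_nbhd (r : ℕ) (v : Vtx r) : {u | (Gg r).Adj v u}.ncard = r := by
  obtain ⟨x, i⟩ := v
  cases x with
  | inl a => rw [nbhd_inl, ncard_Rside]
  | inr a => rw [nbhd_inr, ncard_Lside]

lemma step_closed (r : ℕ) {A : Set (Vtx r)} {v : Vtx r}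
    (hv : v ∈ percStep (Gg r) r A) (hvA : v ∉ A) :
    {u | (Gg r).Adj v u} ⊆ A := by
  rcases hv with h | h
  · exact absurd h hvA
  · have hsub : {u | (Gg r).Adj v u ∧ u ∈ A} ⊆ {u | (Gg r).Adj v u} :=
      fun u hu => hu.1
    have heq : {u | (Gg r).Adj v u ∧ u ∈ A} = {u | (Gg r).Adj v u} :=
      Set.eq_of_subset_of_ncard_le hsub (by rw [ncard_nbhd]; exact h) (Set.toFinite _)
    rw [← heq]
    exact fun u hu => hu.2

lemma invariant (r : ℕ) {A : Set (Vtx r)} (i : Fin 2)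
    (h1 : ¬ Lside r i ⊆ A) (h2 : ¬ Rside r (otr i) ⊆ A) :
    ¬ Lside r i ⊆ percStep (Gg r) r A ∧ ¬ Rside r (otr i) ⊆ percStep (Gg r) r A := by
  obtain ⟨v, hvL, hvA⟩ := Set.not_subset.mp h1
  obtain ⟨w, hwR, hwA⟩ := Set.not_subset.mp h2
  constructor
  · refine Set.not_subset.mpr ⟨v, hvL, fun hv => ?_⟩
    have := step_closed r hv hvA
    obtain ⟨a, -, rfl⟩ := hvL
    rw [nbhd_inl] at this
    exact h2 this
  · refine Set.not_subset.mpr ⟨w, hwR, fun hw => ?_⟩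
    have := step_closed r hw hwA
    obtain ⟨a, -, rfl⟩ := hwR
    rw [nbhd_inr, otr_otr] at this
    exact h1 this

lemma invariant_iter (r : ℕ) {A : Set (Vtx r)} (i : Fin 2)
    (h1 : ¬ Lside r i ⊆ A) (h2 : ¬ Rside r (otr i) ⊆ A) (t : ℕ) :
    ¬ Lside r i ⊆ (percStep (Gg r) r)^[t] A ∧
      ¬ Rside r (otr i) ⊆ (percStep (Gg r) r)^[t] A := by
  induction t with
  | zero => exact ⟨h1, h2⟩
  | succ t ih =>
    rw [Function.iterate_succ_apply']
    exact invariant r i ih.1 ih.2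

lemma side_in_perc (r : ℕ) {A : Set (Vtx r)} (hA : Percolates (Gg r) r A) (i : Fin 2) :
    Lside r i ⊆ A ∨ Rside r (otr i) ⊆ A := by
  by_contra h
  push_neg at h
  obtain ⟨t, ht⟩ := hA
  exact (invariant_iter r i h.1 h.2 t).1 (ht ▸ Set.subset_univ _)

lemma two_r_le (r : ℕ) {A : Set (Vtx r)} {S T : Set (Vtx r)}
    (hS : S ⊆ A) (hT : T ⊆ A) (hd : Disjoint S T)
    (hcS : S.ncard = r) (hcT : T.ncard = r) : 2 * r ≤ A.ncard := by
  have : (S ∪ T).ncard = 2 * r := by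
    rw [Set.ncard_union_eq hd (Set.toFinite _) (Set.toFinite _), hcS, hcT]; ring
  calc 2 * r = (S ∪ T).ncard := this.symm
    _ ≤ A.ncard := Set.ncard_le_ncard (Set.union_subset hS hT) (Set.toFinite _)

lemma disj_LR (r : ℕ) (i j : Fin 2) : Disjoint (Lside r i) (Rside r j) := by
  rw [Set.disjoint_left]
  rintro p ⟨a, -, rfl⟩ ⟨b, -, h⟩
  simp at h

lemma disj_LL (r : ℕ) {i j : Fin 2} (h : i ≠ j) : Disjoint (Lside r i) (Lside r j) := by
  rw [Set.disjoint_left]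
  rintro p ⟨a, -, rfl⟩ ⟨b, -, hb⟩
  exact h (congrArg Prod.snd hb).symm

lemma disj_RR (r : ℕ) {i j : Fin 2} (h : i ≠ j) : Disjoint (Rside r i) (Rside r j) := by
  rw [Set.disjoint_left]
  rintro p ⟨a, -, rfl⟩ ⟨b, -, hb⟩
  exact h (congrArg Prod.snd hb).symm

lemma lower (r : ℕ) {A : Set (Vtx r)} (hA : Percolates (Gg r) r A) : 2 * r ≤ A.ncard := by
  have h0 := side_in_perc r hA 0
  have h1 := side_in_perc r hA 1
  have e0 : otr 0 = (1 : Fin 2) := by decide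
  have e1 : otr 1 = (0 : Fin 2) := by decide
  rw [e0] at h0; rw [e1] at h1
  rcases h0 with h0 | h0 <;> rcases h1 with h1 | h1
  · exact two_r_le r h0 h1 (disj_LL r (i := 0) (j := 1) (by decide)) (ncard_Lside ..) (ncard_Lside ..)
  · exact two_r_le r h0 h1 (disj_LR r 0 0) (ncard_Lside ..) (ncard_Rside ..)
  · exact two_r_le r h1 h0 (disj_LR r 1 1) (ncard_Lside ..) (ncard_Rside ..)
  · exact two_r_le r h0 h1 (disj_RR r (i := 1) (j := 0) (by decide)) (ncard_Rside ..) (ncard_Rside ..)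

lemma fin2_cases : ∀ j : Fin 2, j = 0 ∨ j = 1 := by decide

lemma upper (r : ℕ) : Percolates (Gg r) r (Lside r 0 ∪ Lside r 1) := by
  refine ⟨1, ?_⟩
  rw [Function.iterate_one]
  ext ⟨x, j⟩
  simp only [Set.mem_univ, iff_true]
  cases x with
  | inl a =>
    left
    rcases fin2_cases j with rfl | rfl
    · exact Or.inl ⟨a, trivial, rfl⟩
    · exact Or.inr ⟨a, trivial, rfl⟩
  | inr a =>
    right
    have hsub : {u | (Gg r).Adj (Sum.inr a, j) u} ⊆ Lside r 0 ∪ Lside r 1 := by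
      rw [nbhd_inr]
      rcases fin2_cases (otr j) with h | h <;> rw [h]
      · exact Set.subset_union_left
      · exact Set.subset_union_right
    have heq : {u | (Gg r).Adj (Sum.inr a, j) u ∧ u ∈ Lside r 0 ∪ Lside r 1} =
        {u | (Gg r).Adj (Sum.inr a, j) u} := by
      ext u
      exact ⟨fun hu => hu.1, fun hu => ⟨hu, hsub hu⟩⟩
    show r ≤ _
    rw [heq, ncard_nbhd]

lemma ncard_union_L (r : ℕ) : (Lside r 0 ∪ Lside r 1).ncard = 2 * r := by
  rw [Set.ncard_union_eq (disj_LL r (i := 0) (j := 1) (by decide)) (Set.toFinite _) (Set.toFinite _),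
    ncard_Lside, ncard_Lside]; ring

end Perc16

theorem stmt_16 (r : ℕ) (hr : 2 ≤ r) :
    percNum
      (directProd (completeBipartiteGraph (Fin r) (Fin r))
        (⊤ : SimpleGraph (Fin 2))) r = 2 * r := by
  apply le_antisymm
  · exact Nat.sInf_le ⟨_, Perc16.upper r, Perc16.ncard_union_L r⟩
  · refine le_csInf ⟨2 * r, _, Perc16.upper r, Perc16.ncard_union_L r⟩ ?_
    rintro n ⟨A, hA, rfl⟩
    exact Perc16.lower r hA
end

section
/- Let r ≥ 2 and let G be a connected finite simple graph with at least 3 vertices. Then for every integer n ≥ 2r, the direct product G×K_n satisfies m(G×K_n, r) = r. -/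
open SimpleGraph

section Aux

variable {V : Type*}

lemma subset_percStep (G : SimpleGraph V) (r : ℕ) (A : Set V) : A ⊆ percStep G r A :=
  Set.subset_union_left

def Infected (G : SimpleGraph V) (r : ℕ) (A : Set V) (v : V) : Prop :=
  ∃ t, v ∈ (percStep G r)^[t] A

lemma iterate_mono_time (G : SimpleGraph V) (r : ℕ) (A : Set V) {s t : ℕ} (h : s ≤ t) :
    (percStep G r)^[s] A ⊆ (percStep G r)^[t] A := by
  induction t with
  | zero => obtain rfl : s = 0 := Nat.le_zero.mp h; exact subset_rfl
  | succ t ih =>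
    rcases Nat.eq_or_lt_of_le h with rfl | h'
    · exact subset_rfl
    · intro v hv
      have hv' := ih (Nat.lt_succ_iff.mp h') hv
      rw [Function.iterate_succ_apply']
      exact subset_percStep _ _ _ hv'

lemma infected_of_mem (G : SimpleGraph V) (r : ℕ) (A : Set V) (v : V) (h : v ∈ A) :
    Infected G r A v := ⟨0, h⟩

lemma infected_step [Finite V] {G : SimpleGraph V} {r : ℕ} {A : Set V} {v : V}
    (h : r ≤ {u | G.Adj v u ∧ Infected G r A u}.ncard) : Infected G r A v := by
  classical
  haveI := Fintype.ofFinite V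
  let f : V → ℕ := fun u => if hu : Infected G r A u then hu.choose else 0
  set N := Finset.univ.sup f with hN
  refine ⟨N + 1, ?_⟩
  rw [Function.iterate_succ_apply']
  refine Set.mem_union_right _ ?_
  show r ≤ _
  refine le_trans h (Set.ncard_le_ncard ?_ (Set.toFinite _))
  rintro u ⟨h1, h2⟩
  refine ⟨h1, ?_⟩
  have hu : u ∈ (percStep G r)^[f u] A := by
    simp only [f, dif_pos h2]; exact h2.choose_spec
  exact iterate_mono_time G r A (Finset.le_sup (Finset.mem_univ u)) hu

lemma percolates_of_forall [Finite V] {G : SimpleGraph V} {r : ℕ} {A : Set V}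
    (h : ∀ v, Infected G r A v) : Percolates G r A := by
  classical
  haveI := Fintype.ofFinite V
  let f : V → ℕ := fun u => (h u).choose
  refine ⟨Finset.univ.sup f, ?_⟩
  rw [Set.eq_univ_iff_forall]
  intro v
  exact iterate_mono_time G r A (Finset.le_sup (Finset.mem_univ v)) (h v).choose_spec

lemma percolates_eq_univ [Finite V] {G : SimpleGraph V} {r : ℕ} {A : Set V}
    (hp : Percolates G r A) (hlt : A.ncard < r) : A = Set.univ := by
  have hfix : percStep G r A = A := by
    unfold percStep
    rw [Set.union_eq_left]
    intro v hv
    exfalso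
    have hsub : {u | G.Adj v u ∧ u ∈ A} ⊆ A := fun u hu => hu.2
    have h1 := Set.ncard_le_ncard hsub (Set.toFinite A)
    have hv' : r ≤ {u | G.Adj v u ∧ u ∈ A}.ncard := hv
    omega
  have hiter : ∀ t, (percStep G r)^[t] A = A := by
    intro t; induction t with
    | zero => rfl
    | succ t ih => rw [Function.iterate_succ_apply', ih, hfix]
  obtain ⟨t, ht⟩ := hp
  rw [hiter] at ht; exact ht

lemma le_ncard_of_inj {W : Type*} [Finite W] {k : ℕ} (T : Set W) (f : Fin k → W)
    (hf : Function.Injective f) (hT : ∀ j, f j ∈ T) : k ≤ T.ncard := by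
  have h1 : Set.range f ⊆ T := by rintro _ ⟨j, rfl⟩; exact hT j
  have h2 : (Set.range f).ncard = k := by
    rw [← Nat.card_coe_set_eq, Nat.card_range_of_injective hf]
    simp [Nat.card_eq_fintype_card]
  calc k = (Set.range f).ncard := h2.symm
    _ ≤ T.ncard := Set.ncard_le_ncard h1 (Set.toFinite T)

lemma exists_two_neighbors [Fintype V] (G : SimpleGraph V) (hG : G.Connected)
    (h3 : 3 ≤ Fintype.card V) :
    ∃ g u₁ u₂ : V, u₁ ≠ u₂ ∧ G.Adj g u₁ ∧ G.Adj g u₂ := by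
  classical
  by_contra hc
  push_neg at hc
  have huniq : ∀ g u₁ u₂ : V, G.Adj g u₁ → G.Adj g u₂ → u₁ = u₂ := by
    intro g u₁ u₂ ha hb
    by_contra hne
    exact (hc g u₁ u₂ hne ha) hb
  obtain ⟨a, b, hab⟩ := Fintype.exists_pair_of_one_lt_card (α := V) (by omega)
  obtain ⟨x, hax⟩ : ∃ x, G.Adj a x := by
    obtain ⟨w⟩ := hG.preconnected a b
    cases w with
    | nil => exact absurd rfl hab
    | cons h p => exact ⟨_, h⟩
  have closed : ∀ (v c : V), G.Walk v c → v ∈ ({a, x} : Set V) → c ∈ ({a, x} : Set V) := by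
    intro v c w
    induction w with
    | nil => exact fun hv => hv
    | @cons u d c h p ih =>
      intro hu
      apply ih
      rcases Set.mem_insert_iff.mp hu with rfl | hu'
      · exact Set.mem_insert_iff.mpr (Or.inr (huniq u d x h hax))
      · have hux : u = x := hu'
        subst hux
        exact Set.mem_insert_iff.mpr (Or.inl (huniq u d a h hax.symm))
  have hall : ∀ c : V, c ∈ ({a, x} : Set V) := fun c =>
    closed a c ((hG.preconnected a c).some) (Set.mem_insert a _)
  have hsub : (Set.univ : Set V) ⊆ ({a, x} : Set V) := fun c _ => hall c
  have h1 : (Set.univ : Set V).ncard ≤ ({a, x} : Set V).ncard :=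
    Set.ncard_le_ncard hsub (Set.toFinite _)
  have h2 : ({a, x} : Set V).ncard ≤ 2 :=
    le_trans (Set.ncard_insert_le _ _) (by simp)
  rw [Set.ncard_univ, Nat.card_eq_fintype_card] at h1
  omega

end Aux

theorem stmt_17 {V : Type*} [Fintype V] (G : SimpleGraph V)
    (r : ℕ) (hr : 2 ≤ r) (hG : G.Connected) (hcard : 3 ≤ Fintype.card V)
    (n : ℕ) (hn : 2 * r ≤ n) :
    percNum (directProd G (⊤ : SimpleGraph (Fin n))) r = r := by
  classical
  set H := directProd G (⊤ : SimpleGraph (Fin n)) with hH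
  have hrn : r < n := by omega
  obtain ⟨g, u₁, u₂, hne, hu1, hu2⟩ := exists_two_neighbors G hG hcard
  set A : Set (V × Fin n) := {p | p.1 = g ∧ (p.2 : ℕ) < r} with hA
  -- Claim A: columns of neighbors of `g` get infected at indices ≥ r
  have claimA : ∀ u : V, G.Adj g u → ∀ j : Fin n, r ≤ (j : ℕ) →
      Infected H r A (u, j) := by
    intro u hu j hj
    apply infected_step
    refine le_ncard_of_inj _
      (fun i : Fin r => ((g, ⟨i.val, lt_trans i.isLt hrn⟩) : V × Fin n)) ?_ ?_
    · intro i i' hii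
      exact Fin.ext (congrArg (fun p : V × Fin n => p.2.val) hii)
    · intro i
      refine ⟨⟨hu.symm, ?_⟩, infected_of_mem _ _ _ _ ⟨rfl, i.isLt⟩⟩
      intro hji
      have hval := congrArg Fin.val hji
      simp only at hval
      have := i.isLt
      omega
  -- Claim B: the whole column of g gets infected
  have claimB : ∀ j : Fin n, Infected H r A (g, j) := by
    intro j
    apply infected_step
    set sfun : ℕ → ℕ := fun m => if r + m < (j : ℕ) then r + m else r + m + 1 with hsfun
    have hsb : ∀ k : Fin r, sfun (k.val / 2) < n := by
      intro k; have hk := k.isLt; simp only [hsfun]; split <;> omega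
    refine le_ncard_of_inj _
      (fun k : Fin r =>
        ((if k.val % 2 = 0 then u₁ else u₂, ⟨sfun (k.val / 2), hsb k⟩) : V × Fin n)) ?_ ?_
    · intro k k' hkk
      have h1 := congrArg Prod.fst hkk
      have h2 := congrArg (fun p : V × Fin n => p.2.val) hkk
      simp only at h1 h2
      have hdiv : k.val / 2 = k'.val / 2 := by
        simp only [hsfun] at h2; split_ifs at h2 <;> omega
      have hmod : k.val % 2 = k'.val % 2 := by
        split_ifs at h1
        · omega
        · exact absurd h1 hne
        · exact absurd h1.symm hne
        · omega
      exact Fin.ext (by omega)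
    · intro k
      have hs1 : r ≤ sfun (k.val / 2) := by simp only [hsfun]; split <;> omega
      have hs2 : sfun (k.val / 2) ≠ (j : ℕ) := by simp only [hsfun]; split <;> omega
      refine ⟨⟨?_, ?_⟩, ?_⟩
      · show G.Adj g _
        dsimp only
        split_ifs <;> assumption
      · intro hji
        have hval := congrArg Fin.val hji
        simp only at hval
        exact hs2 hval.symm
      · split_ifs with hk
        · exact claimA u₁ hu1 _ hs1
        · exact claimA u₂ hu2 _ hs1
  -- Claim C: a fully infected column spreads to neighbors
  have claimC : ∀ a b : V, G.Adj a b → (∀ j, Infected H r A (a, j)) →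
      ∀ j : Fin n, Infected H r A (b, j) := by
    intro a b hab hcol j
    apply infected_step
    have hb : ∀ k : Fin r, (if k.val < (j : ℕ) then k.val else k.val + 1) < n := by
      intro k; have := k.isLt; split <;> omega
    refine le_ncard_of_inj _
      (fun k : Fin r => ((a, ⟨_, hb k⟩) : V × Fin n)) ?_ ?_
    · intro k k' hkk
      have h2 := congrArg (fun p : V × Fin n => p.2.val) hkk
      simp only at h2
      refine Fin.ext ?_
      split_ifs at h2 <;> omega
    · intro k
      refine ⟨⟨hab.symm, ?_⟩, hcol _⟩
      intro hji
      have hval := congrArg Fin.val hji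
      simp only at hval
      split_ifs at hval <;> omega
  -- Claim D: everything gets infected
  have claimD : ∀ v : V × Fin n, Infected H r A v := by
    have key : ∀ a b : V, G.Walk a b → (∀ j, Infected H r A (a, j)) →
        ∀ j, Infected H r A (b, j) := by
      intro a b w
      induction w with
      | nil => exact fun h => h
      | cons hadj p ih => exact fun h => ih (claimC _ _ hadj h)
    rintro ⟨h, j⟩
    exact key g h ((hG.preconnected g h).some) claimB j
  have hperc : Percolates H r A := percolates_of_forall claimD
  have hAcard : A.ncard = r := by
    have hAr : A = Set.range
        (fun i : Fin r => ((g, ⟨i.val, lt_trans i.isLt hrn⟩) : V × Fin n)) := by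
      ext ⟨p1, p2⟩
      simp only [hA, Set.mem_setOf_eq, Set.mem_range]
      constructor
      · rintro ⟨h1, h2⟩
        refine ⟨⟨p2.val, h2⟩, ?_⟩
        rw [Prod.ext_iff]
        exact ⟨h1.symm, Fin.ext rfl⟩
      · rintro ⟨i, hi⟩
        have h1 := congrArg Prod.fst hi
        have h2 := congrArg (fun p : V × Fin n => p.2.val) hi
        simp only at h1 h2
        have := i.isLt
        exact ⟨h1.symm, by omega⟩
    rw [hAr, ← Nat.card_coe_set_eq, Nat.card_range_of_injective
      (fun i i' hii => Fin.ext (congrArg (fun p : V × Fin n => p.2.val) hii))]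
    simp [Nat.card_eq_fintype_card]
  have hlow : ∀ m, (∃ B : Set (V × Fin n), Percolates H r B ∧ B.ncard = m) → r ≤ m := by
    rintro m ⟨B, hB, rfl⟩
    by_contra hlt
    push_neg at hlt
    have huniv := percolates_eq_univ hB hlt
    have hcard2 : B.ncard = Fintype.card V * n := by
      rw [huniv, Set.ncard_univ, Nat.card_eq_fintype_card, Fintype.card_prod,
        Fintype.card_fin]
    have hmul : 3 * (2 * r) ≤ Fintype.card V * n := Nat.mul_le_mul hcard hn
    omega
  unfold percNum
  apply le_antisymm
  · exact Nat.sInf_le ⟨A, hperc, hAcard⟩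
  · exact le_csInf ⟨r, A, hperc, hAcard⟩ (fun m hm => hlow m hm)
end

section
/- For every integer n ≥ 2, the n-dimensional hypercube graph Q_n satisfies m(Q_n, n) = 2^{n−1}, i.e., the minimum size of an n-percolating set of Q_n equals half its order. -/
open SimpleGraph

/-- The n-dimensional hypercube graph: vertices are functions Fin n → Bool,
adjacent iff they differ in exactly one coordinate. -/
def hypercubeGraph (n : ℕ) : SimpleGraph (Fin n → Bool) where
  Adj x y := ∃! i, x i ≠ y i
  symm := by
    constructor
    rintro x y ⟨i, hi, hu⟩
    exact ⟨i, hi.symm, fun j hj => hu j hj.symm⟩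
  loopless := by
    constructor
    rintro x ⟨i, hi, -⟩
    exact hi rfl


namespace PercAux

variable {n : ℕ}

/-- Flip coordinate `i` of `x`. -/
def flip (x : Fin n → Bool) (i : Fin n) : Fin n → Bool := Function.update x i (!(x i))

lemma flip_apply_self (x : Fin n → Bool) (i : Fin n) : flip x i i = !(x i) := by
  unfold flip; exact Function.update_self i (!(x i)) x

lemma flip_apply_ne (x : Fin n → Bool) {i j : Fin n} (h : j ≠ i) : flip x i j = x j := by
  unfold flip; exact Function.update_of_ne h (!(x i)) x

lemma adj_flip (x : Fin n → Bool) (i : Fin n) : (hypercubeGraph n).Adj x (flip x i) := by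
  refine ⟨i, ?_, ?_⟩
  · show x i ≠ flip x i i
    rw [flip_apply_self]; cases x i <;> simp
  · intro j hj
    by_contra hji
    exact hj (flip_apply_ne x hji).symm

lemma adj_iff {x u : Fin n → Bool} :
    (hypercubeGraph n).Adj x u ↔ ∃ i, u = flip x i := by
  constructor
  · rintro ⟨i, hi, hu⟩
    refine ⟨i, funext fun j => ?_⟩
    by_cases hj : j = i
    · subst hj
      rw [flip_apply_self]
      cases hxj : x j <;> cases huj : u j <;> simp_all
    · rw [flip_apply_ne x hj]
      by_contra h
      exact hj (hu j (fun he => h he.symm))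
  · rintro ⟨i, rfl⟩; exact adj_flip x i

lemma flip_flip (x : Fin n → Bool) (i : Fin n) : flip (flip x i) i = x := by
  funext j
  by_cases hj : j = i
  · subst hj
    rw [flip_apply_self, flip_apply_self]
    cases x j <;> rfl
  · rw [flip_apply_ne _ hj, flip_apply_ne _ hj]

lemma flip_injective (i : Fin n) : Function.Injective (fun x : Fin n → Bool => flip x i) := by
  intro a b h
  have := congrArg (fun z => flip z i) h
  simpa [flip_flip] using this

lemma flip_coord_injective (x : Fin n → Bool) : Function.Injective (flip x) := by
  intro i j h
  by_contra hij
  have h1 : flip x i i = flip x j i := by rw [h]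
  rw [flip_apply_self, flip_apply_ne x hij] at h1
  cases x i <;> simp_all

/-- Parity of a vertex, in `ZMod 2`. -/
def par (x : Fin n → Bool) : ZMod 2 := ∑ i, if x i then 1 else 0

lemma par_flip (x : Fin n → Bool) (i : Fin n) : par (flip x i) = par x + 1 := by
  unfold par flip
  have hrw : ∀ j, (if Function.update x i (!(x i)) j then (1 : ZMod 2) else 0)
      = Function.update (fun j => if x j then (1 : ZMod 2) else 0) i
          (if !(x i) then 1 else 0) j :=
    fun j => Function.apply_update (fun _ b => if b then (1 : ZMod 2) else 0) x i (!(x i)) j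
  simp only [hrw]
  rw [Finset.sum_update_of_mem (Finset.mem_univ i)]
  rw [← Finset.sum_erase_add Finset.univ _ (Finset.mem_univ i)]
  have : Finset.univ \ {i} = Finset.univ.erase i := by
    ext j; simp [Finset.mem_erase, and_comm]
  rw [this]
  have hval : (if !(x i) then (1 : ZMod 2) else 0) = (if x i then 1 else 0) + 1 := by
    cases x i <;> decide
  rw [hval]; ring

lemma neighborhood_eq (x : Fin n → Bool) :
    {u | (hypercubeGraph n).Adj x u} = Set.range (flip x) := by
  ext u; simp [adj_iff, Set.mem_range, eq_comm]

lemma neighborhood_ncard (x : Fin n → Bool) :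
    ({u | (hypercubeGraph n).Adj x u}).ncard = n := by
  rw [neighborhood_eq, ← Set.image_univ, Set.ncard_image_of_injective _ (flip_coord_injective x),
    Set.ncard_univ, Nat.card_eq_fintype_card, Fintype.card_fin]

/-- The even-parity set. -/
def evenSet (n : ℕ) : Set (Fin n → Bool) := {x | par x = 0}

lemma evenSet_percolates : Percolates (hypercubeGraph n) n (evenSet n) := by
  refine ⟨1, ?_⟩
  rw [Function.iterate_one]
  ext x
  simp only [Set.mem_univ, iff_true, percStep, Set.mem_union, Set.mem_setOf_eq]
  by_cases hx : x ∈ evenSet n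
  · exact Or.inl hx
  · refine Or.inr ?_
    have hset : {u | (hypercubeGraph n).Adj x u ∧ u ∈ evenSet n}
        = {u | (hypercubeGraph n).Adj x u} := by
      ext u
      simp only [Set.mem_setOf_eq, and_iff_left_iff_imp]
      intro hadj
      obtain ⟨i, rfl⟩ := adj_iff.mp hadj
      have hx1 : par x = 1 := by
        have : par x ≠ 0 := hx
        revert this; generalize par x = a; revert a; decide
      show par _ = 0
      rw [par_flip, hx1]; decide
    rw [hset, neighborhood_ncard]

lemma ncard_evenSet (hn : 1 ≤ n) : (evenSet n).ncard = 2 ^ (n - 1) := by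
  have i0 : Fin n := ⟨0, by omega⟩
  have hinj := flip_injective (n := n) i0
  have himg : (fun x => flip x i0) '' evenSet n = (evenSet n)ᶜ := by
    ext y
    constructor
    · rintro ⟨x, hx, rfl⟩
      simp only [Set.mem_compl_iff, evenSet, Set.mem_setOf_eq, par_flip]
      rw [hx]; decide
    · intro hy
      refine ⟨flip y i0, ?_, flip_flip y i0⟩
      have hy1 : par y = 1 := by
        have : par y ≠ 0 := hy
        revert this; generalize par y = a; revert a; decide
      show par _ = 0
      rw [par_flip, hy1]; decide
  have hcompl : (evenSet n).ncard + (evenSet n)ᶜ.ncard = 2 ^ n := by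
    rw [Set.ncard_add_ncard_compl, Nat.card_eq_fintype_card, Fintype.card_fun,
      Fintype.card_bool, Fintype.card_fin]
  have heq : (evenSet n)ᶜ.ncard = (evenSet n).ncard := by
    rw [← himg, Set.ncard_image_of_injective _ hinj]
  have hpow : 2 ^ n = 2 * 2 ^ (n - 1) := by
    conv_lhs => rw [show n = (n - 1) + 1 by omega]
    rw [pow_succ]; ring
  omega

lemma no_two_adj {A : Set (Fin n → Bool)} (hA : Percolates (hypercubeGraph n) n A)
    {x y : Fin n → Bool} (hadj : (hypercubeGraph n).Adj x y) (hx : x ∉ A) (hy : y ∉ A) :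
    False := by
  obtain ⟨t, ht⟩ := hA
  have key : ∀ s, x ∉ (percStep (hypercubeGraph n) n)^[s] A ∧
      y ∉ (percStep (hypercubeGraph n) n)^[s] A := by
    intro s
    induction s with
    | zero => exact ⟨hx, hy⟩
    | succ s ih =>
      rw [Function.iterate_succ_apply']
      set B := (percStep (hypercubeGraph n) n)^[s] A with hB
      have step : ∀ z w : Fin n → Bool, (hypercubeGraph n).Adj z w → z ∉ B → w ∉ B →
          z ∉ percStep (hypercubeGraph n) n B := by
        intro z w hzw hz hw hmem
        rcases hmem with h | h
        · exact hz h
        · have hsub : {u | (hypercubeGraph n).Adj z u ∧ u ∈ B} ⊂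
              {u | (hypercubeGraph n).Adj z u} := by
            rw [Set.ssubset_iff_of_subset (fun u hu => hu.1)]
            exact ⟨w, hzw, fun hc => hw hc.2⟩
          have hlt := Set.ncard_lt_ncard hsub (Set.toFinite _)
          rw [neighborhood_ncard] at hlt
          have h' : n ≤ {u | (hypercubeGraph n).Adj z u ∧ u ∈ B}.ncard := h
          omega
      exact ⟨step x y hadj ih.1 ih.2, step y x hadj.symm ih.2 ih.1⟩
  exact (key t).1 (ht ▸ Set.mem_univ x)

lemma lower_bound (hn : 1 ≤ n) {A : Set (Fin n → Bool)}
    (hA : Percolates (hypercubeGraph n) n A) : 2 ^ (n - 1) ≤ A.ncard := by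
  have i0 : Fin n := ⟨0, by omega⟩
  have hmap : ∀ x ∈ Aᶜ, flip x i0 ∈ A := by
    intro x hx
    by_contra h
    exact no_two_adj hA (adj_flip x i0) hx h
  have hle : Aᶜ.ncard ≤ A.ncard := by
    rw [← Set.ncard_image_of_injective Aᶜ (flip_injective i0)]
    exact Set.ncard_le_ncard (by rintro y ⟨x, hx, rfl⟩; exact hmap x hx) (Set.toFinite _)
  have hcompl : A.ncard + Aᶜ.ncard = 2 ^ n := by
    rw [Set.ncard_add_ncard_compl, Nat.card_eq_fintype_card, Fintype.card_fun,
      Fintype.card_bool, Fintype.card_fin]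
  have hpow : 2 ^ n = 2 * 2 ^ (n - 1) := by
    conv_lhs => rw [show n = (n - 1) + 1 by omega]
    rw [pow_succ]; ring
  omega

end PercAux

theorem stmt_18 (n : ℕ) (hn : 2 ≤ n) :
    percNum (hypercubeGraph n) n = 2 ^ (n - 1) := by
  have hn1 : 1 ≤ n := by omega
  apply le_antisymm
  · exact Nat.sInf_le ⟨PercAux.evenSet n, PercAux.evenSet_percolates,
      PercAux.ncard_evenSet hn1⟩
  · have hne : {m | ∃ A : Set (Fin n → Bool),
        Percolates (hypercubeGraph n) n A ∧ A.ncard = m}.Nonempty :=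
      ⟨2 ^ (n - 1), PercAux.evenSet n, PercAux.evenSet_percolates, PercAux.ncard_evenSet hn1⟩
    obtain ⟨A, hA, hcard⟩ := Nat.sInf_mem hne
    rw [percNum, ← hcard]
    exact PercAux.lower_bound hn1 hA
end
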